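/- Let (A,G,α) be a free C*-dynamical system with fixed point algebra B, and let A₀ ⊆ A be a G-invariant unital C*-subalgebra such that the induced system (A₀,G,α) is also free and A₀^G = B. Then A₀ = A. -/

import Mathlib

open MeasureTheory

private lemma cont_integrable' {G E : Type*} [TopologicalSpace G] [CompactSpace G]
    [MeasurableSpace G] [OpensMeasurableSpace G] [NormedAddCommGroup E]
    (μ : Measure G) [IsFiniteMeasureOnCompacts μ]
    {f : G → E} (hf : Continuous f) : Integrable f μ :=
  hf.integrable_of_hasCompactSupport
    (IsCompact.of_isClosed_subset isCompact_univ (isClosed_tsupport f) (Set.subset_univ _))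



/-- **Lemma 3.7 (no-go result).** Let `(A,G,α)` be a free C*-dynamical system with fixed
point algebra `B`: `G` is a compact group acting strongly continuously on the unital
C*-algebra `A` by *-automorphisms, and the Ellwood map `Φ(x ⊗ y)(g) = x·α_g(y)` has dense
range in `C(G,A)`.  Let `A₀ ⊆ A` be a `G`-invariant closed unital *-subalgebra such that
the induced C*-dynamical system `(A₀,G,α)` is also free (every continuous function with
values in `A₀` is approximable by sums of functions `g ↦ x·α_g(y)` with `x, y ∈ A₀`) and
such that `A₀` has the same fixed point algebra, `A₀^G = B = A^G`.  Then `A₀ = A`. -/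
theorem free_subsystem_with_same_fixed_points_eq
    {G : Type*} [Group G] [TopologicalSpace G] [IsTopologicalGroup G] [CompactSpace G]
    {A : Type*} [NormedRing A] [StarRing A] [CStarRing A] [NormedAlgebra ℂ A]
    [CompleteSpace A] [StarModule ℂ A] [NormOneClass A]
    (α : G → A ≃⋆ₐ[ℂ] A)
    (hα1 : ∀ a : A, α 1 a = a)
    (hαmul : ∀ g h : G, ∀ a : A, α (g * h) a = α g (α h a))
    (hαcont : Continuous fun p : G × A => α p.1 p.2)
    -- freeness of (A,G,α) in the sense of Ellwood
    (hfree : (Submodule.span ℂ {F : ContinuousMap G A | ∃ x y : A, ∀ g : G, F g =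
      x * α g y}).topologicalClosure = ⊤)
    (A₀ : StarSubalgebra ℂ A) (hA₀closed : IsClosed (A₀ : Set A))
    (hA₀inv : ∀ g : G, ∀ a ∈ A₀, α g a ∈ A₀)
    -- freeness of the induced system (A₀,G,α)
    (hfree₀ : ∀ F : ContinuousMap G A, (∀ g : G, F g ∈ A₀) →
      F ∈ closure ((Submodule.span ℂ {F : ContinuousMap G A | ∃ x ∈ A₀, ∃ y ∈ A₀,
        ∀ g : G, F g = x * α g y} : Submodule ℂ (ContinuousMap G A)) : Set (ContinuousMap G A)))
    -- A₀ has the same fixed point algebra: A₀^G = A^G = B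
    (hfix : ∀ a : A, (∀ g : G, α g a = a) → a ∈ A₀) :
    ∀ a : A, a ∈ A₀ := by

  classical
  letI : CStarAlgebra A := ⟨⟩
  letI : MeasurableSpace G := borel G
  haveI : BorelSpace G := ⟨rfl⟩
  haveI : LocallyCompactSpace G := inferInstance
  set K₀ : TopologicalSpace.PositiveCompacts G :=
    ⟨⟨Set.univ, isCompact_univ⟩, by simp⟩ with hK₀
  set μ : Measure G := Measure.haarMeasure K₀ with hμ
  haveI : IsProbabilityMeasure μ := ⟨by
    exact Measure.haarMeasure_self (K₀ := K₀)⟩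
  -- continuity of orbit maps
  have contα : ∀ a : A, Continuous fun g : G => α g a := fun a =>
    hαcont.comp (continuous_id.prodMk continuous_const)
  have hnorm : ∀ (g : G) (x : A), ‖α g x‖ = ‖x‖ := fun g x => StarAlgEquiv.norm_map (α g) x
  have hint : ∀ (f : G → A), Continuous f → Integrable f μ := fun f hf => cont_integrable' μ hf
  -- the continuous linear map given by α h
  let L : G → A →L[ℂ] A := fun h =>
    { toFun := fun x => α h x
      map_add' := fun x y => map_add (α h) x y
      map_smul' := fun c x => map_smul (α h) c x
      cont := hαcont.comp (continuous_const.prodMk continuous_id) }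
  -- the conditional expectation lands in A₀
  have hPfix : ∀ c : A, (∫ g, α g c ∂μ) ∈ A₀ := by
    intro c
    apply hfix
    intro h
    have h1 : α h (∫ g, α g c ∂μ) = ∫ g, α h (α g c) ∂μ :=
      (ContinuousLinearMap.integral_comp_comm (L h) (hint _ (contα c))).symm
    rw [h1]
    calc ∫ g, α h (α g c) ∂μ = ∫ g, α (h * g) c ∂μ := by simp [hαmul]
    _ = ∫ g, α g c ∂μ := integral_mul_left_eq_self (fun g => α g c) h
  intro a
  -- the transfer operator T
  have hintT : ∀ F : ContinuousMap G A, Integrable (fun g => F g * α g a) μ :=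
    fun F => hint _ (F.continuous.mul (contα a))
  let Tlin : ContinuousMap G A →ₗ[ℂ] A :=
    { toFun := fun F => ∫ g, F g * α g a ∂μ
      map_add' := fun F F' => by
        simp only [ContinuousMap.add_apply, add_mul]
        exact integral_add (hintT F) (hintT F')
      map_smul' := fun c F => by
        simp only [ContinuousMap.smul_apply, smul_mul_assoc, RingHom.id_apply]
        exact integral_smul c _ }
  have hTbound : ∀ F : ContinuousMap G A, ‖Tlin F‖ ≤ ‖a‖ * ‖F‖ := by
    intro F
    have : ∀ g : G, ‖F g * α g a‖ ≤ ‖a‖ * ‖F‖ := by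
      intro g
      calc ‖F g * α g a‖ ≤ ‖F g‖ * ‖α g a‖ := norm_mul_le _ _
      _ = ‖F g‖ * ‖a‖ := by rw [hnorm]
      _ ≤ ‖F‖ * ‖a‖ := by
          exact mul_le_mul_of_nonneg_right (F.norm_coe_le_norm g) (norm_nonneg a)
      _ = ‖a‖ * ‖F‖ := mul_comm _ _
    calc ‖Tlin F‖ ≤ ∫ _g, ‖a‖ * ‖F‖ ∂μ :=
        norm_integral_le_of_norm_le (integrable_const _) (Filter.Eventually.of_forall this)
    _ = ‖a‖ * ‖F‖ := by simp
  let T : ContinuousMap G A →L[ℂ] A := Tlin.mkContinuous ‖a‖ hTbound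
  -- T maps the closure of span₀ into A₀
  set M : Submodule ℂ (ContinuousMap G A) :=
    (Subalgebra.toSubmodule A₀.toSubalgebra).comap (T : ContinuousMap G A →ₗ[ℂ] A) with hM
  have hgen : {F : ContinuousMap G A | ∃ x ∈ A₀, ∃ y ∈ A₀, ∀ g : G, F g = x * α g y} ⊆
      (M : Set (ContinuousMap G A)) := by
    rintro F ⟨x, hx, y, hy, hF⟩
    have hTF : T F = x * ∫ g, α g (y * a) ∂μ := by
      show (∫ g, F g * α g a ∂μ) = _
      have : ∀ g : G, F g * α g a = x * α g (y * a) := by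
        intro g
        rw [hF g, map_mul, mul_assoc]
      rw [integral_congr_ae (Filter.Eventually.of_forall this)]
      exact
        ((ContinuousLinearMap.mul ℂ A x).integral_comp_comm (hint _ (contα (y * a))))
    show T F ∈ A₀
    rw [hTF]
    exact mul_mem hx (hPfix (y * a))
  have hMclosed : IsClosed (M : Set (ContinuousMap G A)) := by
    have : (M : Set (ContinuousMap G A)) = (⇑T) ⁻¹' (A₀ : Set A) := rfl
    rw [this]
    exact hA₀closed.preimage T.continuous
  have key : ∀ F : ContinuousMap G A,
      F ∈ closure ((Submodule.span ℂ {F : ContinuousMap G A | ∃ x ∈ A₀, ∃ y ∈ A₀,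
        ∀ g : G, F g = x * α g y} : Submodule ℂ (ContinuousMap G A)) :
        Set (ContinuousMap G A)) → T F ∈ A₀ := by
    intro F hF
    have hle : (Submodule.span ℂ {F : ContinuousMap G A | ∃ x ∈ A₀, ∃ y ∈ A₀,
        ∀ g : G, F g = x * α g y}) ≤ M := Submodule.span_le.mpr hgen
    have := closure_minimal (fun x hx => hle hx) hMclosed hF
    exact this
  -- now the approximation argument
  suffices h : a ∈ closure (A₀ : Set A) by rwa [hA₀closed.closure_eq] at h
  rw [Metric.mem_closure_iff]
  intro ε hε
  -- the open set where α g a is close to a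
  set U : Set G := {g : G | ‖α g a - a‖ < ε / 2} with hU
  have hUopen : IsOpen U := by
    have hc : Continuous fun g : G => ‖α g a - a‖ := ((contα a).sub continuous_const).norm
    exact isOpen_lt hc continuous_const
  have h1U : (1 : G) ∈ U := by
    simp only [hU, Set.mem_setOf_eq, hα1, sub_self, norm_zero]
    linarith
  obtain ⟨f, hf1, hf0, hfc, hf01⟩ :=
    exists_continuous_one_zero_of_isCompact (isCompact_singleton (x := (1 : G)))
      hUopen.isClosed_compl (Set.disjoint_singleton_left.mpr (fun h => h h1U))
  have hnn : ∀ g, 0 ≤ f g := fun g => (hf01 g).1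
  have hsupp : Function.support f ⊆ U := by
    intro g hg
    by_contra hgU
    exact hg (hf0 hgU)
  have hfint : Integrable f μ := cont_integrable' μ f.continuous
  set c : ℝ := ∫ g, f g ∂μ with hc
  have hcpos : 0 < c := by
    rw [hc, integral_pos_iff_support_of_nonneg hnn hfint]
    have hsopen : IsOpen (Function.support f) :=
      f.continuous.isOpen_support
    exact hsopen.measure_pos μ ⟨1, by simp [hf1 rfl]⟩
  -- the A₀-valued bump function
  set F₀ : ContinuousMap G A := ⟨fun g => ((f g / c : ℝ) : ℂ) • (1 : A),
    ((Complex.continuous_ofReal.comp (f.continuous.div_const c)).smul continuous_const)⟩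
    with hF₀
  have hF₀mem : ∀ g : G, F₀ g ∈ A₀ := fun g => A₀.smul_mem A₀.one_mem _
  have hb : T F₀ ∈ A₀ := key F₀ (hfree₀ F₀ hF₀mem)
  refine ⟨T F₀, hb, ?_⟩
  -- estimate
  have hTF₀ : T F₀ = ∫ g, ((f g / c : ℝ) : ℂ) • α g a ∂μ := by
    show (∫ g, F₀ g * α g a ∂μ) = _
    apply integral_congr_ae
    apply Filter.Eventually.of_forall
    intro g
    show (((f g / c : ℝ) : ℂ) • (1 : A)) * α g a = _
    rw [smul_mul_assoc, one_mul]
  have ha : a = ∫ g, ((f g / c : ℝ) : ℂ) • a ∂μ := by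
    rw [integral_smul_const]
    have h2 : (∫ g, ((f g / c : ℝ) : ℂ) ∂μ) = ((∫ g, f g / c ∂μ : ℝ) : ℂ) :=
      integral_ofReal
    have h3 : (∫ g, f g / c ∂μ) = 1 := by
      rw [integral_div, ← hc, div_self (ne_of_gt hcpos)]
    rw [h2, h3]
    norm_num
  have hdiff : T F₀ - a = ∫ g, ((f g / c : ℝ) : ℂ) • (α g a - a) ∂μ := by
    have h1 : Integrable (fun g => ((f g / c : ℝ) : ℂ) • α g a) μ :=
      hint _ ((Complex.continuous_ofReal.comp (f.continuous.div_const c)).smul (contα a))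
    have h2 : Integrable (fun g => ((f g / c : ℝ) : ℂ) • a) μ :=
      hint _ ((Complex.continuous_ofReal.comp (f.continuous.div_const c)).smul
        continuous_const)
    calc T F₀ - a = (∫ g, ((f g / c : ℝ) : ℂ) • α g a ∂μ) -
        ∫ g, ((f g / c : ℝ) : ℂ) • a ∂μ := by rw [hTF₀, ← ha]
    _ = ∫ g, (((f g / c : ℝ) : ℂ) • α g a - ((f g / c : ℝ) : ℂ) • a) ∂μ :=
        (integral_sub h1 h2).symm
    _ = ∫ g, ((f g / c : ℝ) : ℂ) • (α g a - a) ∂μ := by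
        simp only [smul_sub]
  have hbound : ‖T F₀ - a‖ ≤ ε / 2 := by
    rw [hdiff]
    have hptwise : ∀ g : G, ‖((f g / c : ℝ) : ℂ) • (α g a - a)‖ ≤ f g / c * (ε / 2) := by
      intro g
      rw [norm_smul, Complex.norm_real, Real.norm_eq_abs,
        abs_of_nonneg (div_nonneg (hnn g) hcpos.le)]
      by_cases hg : f g = 0
      · simp [hg]
      · have hgU : g ∈ U := hsupp hg
        exact mul_le_mul_of_nonneg_left (le_of_lt hgU) (div_nonneg (hnn g) hcpos.le)
    calc ‖∫ g, ((f g / c : ℝ) : ℂ) • (α g a - a) ∂μ‖ ≤ ∫ g, f g / c * (ε / 2) ∂μ :=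
        norm_integral_le_of_norm_le ((hfint.div_const c).mul_const _)
          (Filter.Eventually.of_forall hptwise)
    _ = (∫ g, f g / c ∂μ) * (ε / 2) := integral_mul_const _ _
    _ = ε / 2 := by rw [integral_div, ← hc, div_self (ne_of_gt hcpos), one_mul]
  rw [dist_eq_norm, ← norm_neg, neg_sub]
  linarith
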